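/- arXiv:2404.05812 — 3 statements merged into one kernel-verified Lean document; each statement's English description precedes it below -/
import Mathlib

section
/- For every t > 0 and every x ∈ ℝ³, ∫_{ℝ³} dy / (|y|² (1 + t + |x − y|)³) ≤ 7π / t². -/
open MeasureTheory Real

section KernelAux

open Set Metric Filter

noncomputable section

/-- Transfer of integrability from the 1D radial profile to `ℝ³`. -/
lemma kernel_radial_integrable_E3 (f : ℝ → ℝ) (hm : Measurable f)
    (hf : IntegrableOn (fun r => r ^ 2 * f r) (Ioi (0:ℝ))) :
    Integrable (fun y : EuclideanSpace ℝ (Fin 3) => f ‖y‖) := by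
  set E := EuclideanSpace ℝ (Fin 3)
  have hdim : Module.finrank ℝ E - 1 = 2 := by
    simp [E, finrank_euclideanSpace]
  have h1 : Integrable (fun r : Ioi (0:ℝ) => f r.1) (Measure.volumeIoiPow 2) := by
    rw [Measure.volumeIoiPow, integrable_withDensity_iff
      ((measurable_subtype_coe.pow_const 2).ennreal_ofReal)
      (ae_of_all _ fun r => ENNReal.ofReal_lt_top)]
    have key : Integrable ((fun s : ℝ => f s * s ^ 2) ∘ (Subtype.val : Ioi (0:ℝ) → ℝ))
        (Measure.comap Subtype.val (volume : Measure ℝ)) := by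
      rw [← (MeasurableEmbedding.subtype_coe measurableSet_Ioi).integrable_map_iff,
        map_comap_subtype_coe measurableSet_Ioi]
      exact hf.congr (ae_of_all _ fun r => mul_comm _ _)
    refine key.congr (ae_of_all _ fun r => ?_)
    simp only [Function.comp_apply]
    rw [ENNReal.toReal_ofReal (by positivity)]
  have h2 : Integrable (fun p : sphere (0:E) 1 × Ioi (0:ℝ) => f p.2.1)
      ((volume : Measure E).toSphere.prod (Measure.volumeIoiPow 2)) := by
    have hs := h1.smul_measure (c := (volume : Measure E).toSphere univ) (measure_ne_top _ _)
    rw [← Measure.map_snd_prod] at hs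
    have hmeas : AEStronglyMeasurable (fun r : Ioi (0:ℝ) => f r.1)
        (Measure.map Prod.snd ((volume : Measure E).toSphere.prod (Measure.volumeIoiPow 2))) :=
      (hm.comp measurable_subtype_coe).aestronglyMeasurable
    exact (integrable_map_measure hmeas measurable_snd.aemeasurable).mp hs
  rw [← hdim] at h2
  have h3 := ((volume : Measure E).measurePreserving_homeomorphUnitSphereProd.integrable_comp_emb
    (Homeomorph.measurableEmbedding _)).2 h2
  have h4 : Integrable (fun x : ({(0:E)}ᶜ : Set E) => f ‖(x : E)‖)
      ((volume : Measure E).comap Subtype.val) :=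
    h3.congr (ae_of_all _ fun x => by simp [homeomorphUnitSphereProd])
  have h5 : Integrable (fun y : E => f ‖y‖)
      (Measure.map Subtype.val ((volume : Measure E).comap Subtype.val)) :=
    ((MeasurableEmbedding.subtype_coe
      (measurableSet_singleton (0:E)).compl).integrable_map_iff).2 h4
  rwa [map_comap_subtype_coe (measurableSet_singleton (0:E)).compl,
    MeasureTheory.restrict_compl_singleton] at h5

lemma kernel_volume_unitBall_E3 :
    (volume (ball (0 : EuclideanSpace ℝ (Fin 3)) 1)).toReal = 4 / 3 * π := by
  rw [EuclideanSpace.volume_ball]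
  have hcard : Fintype.card (Fin 3) = 3 := by simp
  rw [hcard, Nat.cast_ofNat]
  have hG : Real.Gamma ((3 : ℝ) / 2 + 1) = 3 / 4 * Real.sqrt π := by
    rw [Real.Gamma_add_one (by norm_num)]
    have : (3 : ℝ) / 2 = 1 / 2 + 1 := by norm_num
    rw [this, Real.Gamma_add_one (by norm_num), Real.Gamma_one_half_eq]
    ring
  have hsq : Real.sqrt π ^ 3 = π * Real.sqrt π := by
    have := Real.sq_sqrt pi_nonneg
    nlinarith [Real.sqrt_nonneg π]
  have hs : Real.sqrt π > 0 := Real.sqrt_pos.2 pi_pos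
  rw [hG]
  have hval : Real.sqrt π ^ 3 / (3 / 4 * Real.sqrt π) = 4 / 3 * π := by
    rw [hsq]; field_simp
  rw [hval, ENNReal.toReal_mul, ENNReal.toReal_pow, ENNReal.toReal_ofReal (by norm_num),
    ENNReal.toReal_ofReal (by positivity)]
  norm_num

/-- Polar-coordinates value of a radial integral on `ℝ³`. -/
lemma kernel_radial_integral_E3 (f : ℝ → ℝ) :
    (∫ y : EuclideanSpace ℝ (Fin 3), f ‖y‖) =
      (4 * π) * ∫ r in Ioi (0:ℝ), r ^ 2 * f r := by
  rw [integral_fun_norm_addHaar (volume : Measure (EuclideanSpace ℝ (Fin 3))) f]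
  have hdim : Module.finrank ℝ (EuclideanSpace ℝ (Fin 3)) = 3 := by
    simp [finrank_euclideanSpace]
  rw [hdim, measureReal_def, kernel_volume_unitBall_E3]
  norm_num [smul_eq_mul]
  ring

variable {t : ℝ}

lemma kernel_hasDerivAt_aux (ht : 0 < t) {r : ℝ} (hr : 0 ≤ r) :
    HasDerivAt (fun s : ℝ => -(1/2) * ((t+s)^2)⁻¹ + (2*t/3) * ((t+s)^3)⁻¹ - (t^2/4) * ((t+s)^4)⁻¹)
      (r ^ 2 * ((t + r) ^ 5)⁻¹) r := by
  have hne : t + r ≠ 0 := by positivity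
  have h1 : HasDerivAt (fun s : ℝ => t + s) 1 r := (hasDerivAt_id r).const_add t
  have h2 := (h1.pow 2).inv (pow_ne_zero 2 hne)
  have h3 := (h1.pow 3).inv (pow_ne_zero 3 hne)
  have h4 := (h1.pow 4).inv (pow_ne_zero 4 hne)
  have h := ((h2.const_mul (-(1/2 : ℝ))).add (h3.const_mul (2*t/3))).sub (h4.const_mul (t^2/4))
  refine h.congr_deriv ?_
  simp only [Pi.pow_apply]
  field_simp
  ring

lemma kernel_tendsto_aux :
    Tendsto (fun s : ℝ => -(1/2) * ((t+s)^2)⁻¹ + (2*t/3) * ((t+s)^3)⁻¹ - (t^2/4) * ((t+s)^4)⁻¹)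
      atTop (nhds 0) := by
  have hb : Tendsto (fun s : ℝ => t + s) atTop atTop :=
    tendsto_atTop_add_const_left _ t tendsto_id
  have hk : ∀ k : ℕ, k ≠ 0 → Tendsto (fun s : ℝ => ((t+s)^k)⁻¹) atTop (nhds 0) := by
    intro k hk
    exact ((tendsto_pow_atTop hk).comp hb).inv_tendsto_atTop
  have h := (((hk 2 (by norm_num)).const_mul (-(1/2:ℝ))).add
      ((hk 3 (by norm_num)).const_mul (2*t/3))).sub ((hk 4 (by norm_num)).const_mul (t^2/4))
  simpa using h

lemma kernel_integrableOn_aux2 (ht : 0 < t) :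
    IntegrableOn (fun r : ℝ => r ^ 2 * ((t + r) ^ 5)⁻¹) (Ioi (0:ℝ)) :=
  integrableOn_Ioi_deriv_of_nonneg' (fun r hr => kernel_hasDerivAt_aux ht hr)
    (fun r hr => mul_nonneg (sq_nonneg r |>.trans_eq (sq r ▸ rfl))
      (inv_nonneg.2 (pow_nonneg (by have : 0 < r := hr; linarith) 5))) kernel_tendsto_aux

lemma kernel_integral_aux2 (ht : 0 < t) :
    ∫ r in Ioi (0:ℝ), r ^ 2 * ((t + r) ^ 5)⁻¹ = 1 / (12 * t ^ 2) := by
  rw [integral_Ioi_of_hasDerivAt_of_nonneg' (fun r hr => kernel_hasDerivAt_aux ht hr)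
    (fun r hr => mul_nonneg (sq_nonneg r |>.trans_eq (sq r ▸ rfl))
      (inv_nonneg.2 (pow_nonneg (by have : 0 < r := hr; linarith) 5))) kernel_tendsto_aux]
  have hne : t ≠ 0 := ht.ne'
  field_simp
  ring

lemma kernel_eqOn_Ioc (ht : 0 < t) :
    EqOn (fun r : ℝ => r ^ 2 * (if r ≤ t then (t^3)⁻¹ * (r^2)⁻¹ else (r^5)⁻¹))
      (fun _ : ℝ => (t^3)⁻¹) (Ioc (0:ℝ) t) := by
  intro r hr
  have h0 : (0:ℝ) < r := hr.1
  simp only [if_pos hr.2]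
  field_simp

lemma kernel_eqOn_Ioi (ht : 0 < t) :
    EqOn (fun r : ℝ => r ^ 2 * (if r ≤ t then (t^3)⁻¹ * (r^2)⁻¹ else (r^5)⁻¹))
      (fun r : ℝ => r ^ (-3 : ℝ)) (Ioi t) := by
  intro r hr
  have h0 : (0:ℝ) < r := ht.trans hr
  have hrt : ¬ r ≤ t := not_le.2 hr
  simp only [if_neg hrt]
  rw [show (-3 : ℝ) = -(3:ℕ) by norm_num, Real.rpow_neg h0.le, Real.rpow_natCast]
  field_simp

lemma kernel_integrableOn_aux1 (ht : 0 < t) :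
    IntegrableOn (fun r : ℝ => r ^ 2 * (if r ≤ t then (t^3)⁻¹ * (r^2)⁻¹ else (r^5)⁻¹))
      (Ioi (0:ℝ)) := by
  rw [← Ioc_union_Ioi_eq_Ioi ht.le]
  refine IntegrableOn.union ?_ ?_
  · exact ((integrableOn_const measure_Ioc_lt_top.ne).congr_fun
      (kernel_eqOn_Ioc ht).symm measurableSet_Ioc)
  · exact ((integrableOn_Ioi_rpow_of_lt (by norm_num) ht).congr_fun
      (kernel_eqOn_Ioi ht).symm measurableSet_Ioi)

lemma kernel_integral_aux1 (ht : 0 < t) :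
    ∫ r in Ioi (0:ℝ), r ^ 2 * (if r ≤ t then (t^3)⁻¹ * (r^2)⁻¹ else (r^5)⁻¹)
      = 3 / (2 * t ^ 2) := by
  rw [← Ioc_union_Ioi_eq_Ioi ht.le,
    setIntegral_union (Ioc_disjoint_Ioi le_rfl) measurableSet_Ioi
      ((integrableOn_const measure_Ioc_lt_top.ne).congr_fun
        (kernel_eqOn_Ioc ht).symm measurableSet_Ioc)
      ((integrableOn_Ioi_rpow_of_lt (by norm_num) ht).congr_fun
        (kernel_eqOn_Ioi ht).symm measurableSet_Ioi),
    setIntegral_congr_fun measurableSet_Ioc (kernel_eqOn_Ioc ht),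
    setIntegral_congr_fun measurableSet_Ioi (kernel_eqOn_Ioi ht),
    setIntegral_const, integral_Ioi_rpow_of_lt (by norm_num) ht]
  rw [Real.volume_real_Ioc_of_le ht.le, smul_eq_mul]
  rw [show (-3 : ℝ) + 1 = -(2:ℕ) by norm_num, Real.rpow_neg ht.le, Real.rpow_natCast]
  have hne : t ≠ 0 := ht.ne'
  field_simp
  ring

end

end KernelAux

/-- For every `t > 0` and every `x ∈ ℝ³`,
`∫_{ℝ³} dy / (|y|² (1 + t + |x − y|)³) ≤ 7π / t²`. -/
theorem kernel_time_decay_bound :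
    ∀ t : ℝ, 0 < t → ∀ x : EuclideanSpace ℝ (Fin 3),
      (∫ y : EuclideanSpace ℝ (Fin 3),
          1 / (‖y‖ ^ 2 * (1 + t + ‖x - y‖) ^ 3)) ≤ 7 * Real.pi / t ^ 2 := by
  intro t ht x
  set f₁ : ℝ → ℝ := fun r => if r ≤ t then (t^3)⁻¹ * (r^2)⁻¹ else (r^5)⁻¹ with hf₁
  set f₂ : ℝ → ℝ := fun r => ((t + r) ^ 5)⁻¹ with hf₂
  have hm1 : Measurable f₁ := by
    refine Measurable.ite (measurableSet_le measurable_id measurable_const) ?_ ?_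
    · exact ((measurable_id.pow_const 2).inv).const_mul _
    · exact (measurable_id.pow_const 5).inv
  have hm2 : Measurable f₂ := ((measurable_const.add measurable_id).pow_const 5).inv
  -- nonnegativity of the pieces
  have hf₁nn : ∀ r : ℝ, 0 ≤ f₁ r := by
    intro r
    simp only [hf₁]
    split
    · positivity
    · next h =>
        have hr : 0 < r := lt_of_lt_of_le ht (le_of_not_ge h)
        positivity
  have hf₂nn : ∀ r : ℝ, 0 ≤ r → 0 ≤ f₂ r := fun r hr =>
    inv_nonneg.2 (pow_nonneg (by linarith) 5)
  -- integrability of the majorant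
  have hint1 : Integrable (fun y : EuclideanSpace ℝ (Fin 3) => f₁ ‖y‖) :=
    kernel_radial_integrable_E3 f₁ hm1 (kernel_integrableOn_aux1 ht)
  have hint2 : Integrable (fun y : EuclideanSpace ℝ (Fin 3) => f₂ ‖y‖) :=
    kernel_radial_integrable_E3 f₂ hm2 (kernel_integrableOn_aux2 ht)
  have hint2' : Integrable (fun y : EuclideanSpace ℝ (Fin 3) => f₂ ‖y - x‖) := hint2.comp_sub_right x
  have hintg : Integrable (fun y : EuclideanSpace ℝ (Fin 3) => f₁ ‖y‖ + f₂ ‖y - x‖) := hint1.add hint2'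
  -- pointwise bound
  have hptw : ∀ y : EuclideanSpace ℝ (Fin 3), 1 / (‖y‖ ^ 2 * (1 + t + ‖x - y‖) ^ 3) ≤ f₁ ‖y‖ + f₂ ‖y - x‖ := by
    intro y
    set r : ℝ := ‖y‖ with hrdef
    set s : ℝ := ‖x - y‖ with hsdef
    have hr0 : 0 ≤ r := norm_nonneg y
    have hs0 : 0 ≤ s := norm_nonneg _
    have hyx : ‖y - x‖ = s := by rw [hsdef, norm_sub_rev]
    rw [hyx]
    have hf2s : 0 ≤ f₂ s := hf₂nn s hs0
    rcases eq_or_lt_of_le hr0 with h0 | h0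
    · rw [← h0]
      simp only [one_div]
      rw [show ((0:ℝ)^2 * (1 + t + s)^3)⁻¹ = 0 by simp]
      exact add_nonneg (hf₁nn 0) hf2s
    · by_cases hrt : r ≤ t
      · have hb : 1 / (r ^ 2 * (1 + t + s) ^ 3) ≤ f₁ r := by
          have h1 : t ^ 3 ≤ (1 + t + s) ^ 3 := by
            apply pow_le_pow_left₀ ht.le; linarith
          have h2 : r ^ 2 * t ^ 3 ≤ r ^ 2 * (1 + t + s) ^ 3 :=
            mul_le_mul_of_nonneg_left h1 (by positivity)
          have h3 : (0:ℝ) < r ^ 2 * t ^ 3 := by positivity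
          calc 1 / (r ^ 2 * (1 + t + s) ^ 3) ≤ 1 / (r ^ 2 * t ^ 3) :=
                one_div_le_one_div_of_le h3 h2
            _ = f₁ r := by
                simp only [hf₁, if_pos hrt]
                rw [one_div, mul_inv]
                ring
        linarith
      · push_neg at hrt
        by_cases hsr : r ≤ t + s
        · have hb : 1 / (r ^ 2 * (1 + t + s) ^ 3) ≤ f₁ r := by
            have h1 : r ^ 3 ≤ (1 + t + s) ^ 3 := by
              apply pow_le_pow_left₀ h0.le; linarith
            have h2 : r ^ 2 * r ^ 3 ≤ r ^ 2 * (1 + t + s) ^ 3 :=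
              mul_le_mul_of_nonneg_left h1 (by positivity)
            have h3 : (0:ℝ) < r ^ 2 * r ^ 3 := by positivity
            calc 1 / (r ^ 2 * (1 + t + s) ^ 3) ≤ 1 / (r ^ 2 * r ^ 3) :=
                  one_div_le_one_div_of_le h3 h2
              _ = f₁ r := by
                  simp only [hf₁, if_neg (not_le.2 hrt)]
                  rw [one_div, ← pow_add]
          linarith
        · push_neg at hsr
          have hb : 1 / (r ^ 2 * (1 + t + s) ^ 3) ≤ f₂ s := by
            have hts : (0:ℝ) < t + s := by linarith
            have h1 : (t + s) ^ 2 ≤ r ^ 2 := by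
              apply pow_le_pow_left₀ hts.le hsr.le
            have h1' : (t + s) ^ 3 ≤ (1 + t + s) ^ 3 := by
              apply pow_le_pow_left₀ hts.le; linarith
            have h2 : (t + s) ^ 2 * (t + s) ^ 3 ≤ r ^ 2 * (1 + t + s) ^ 3 :=
              mul_le_mul h1 h1' (by positivity) (by positivity)
            have h3 : (0:ℝ) < (t + s) ^ 2 * (t + s) ^ 3 := by positivity
            calc 1 / (r ^ 2 * (1 + t + s) ^ 3) ≤ 1 / ((t + s) ^ 2 * (t + s) ^ 3) :=
                  one_div_le_one_div_of_le h3 h2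
              _ = f₂ s := by
                  simp only [hf₂]
                  rw [one_div, ← pow_add]
          have := hf₁nn r
          linarith
  have hnn : ∀ y : EuclideanSpace ℝ (Fin 3), 0 ≤ 1 / (‖y‖ ^ 2 * (1 + t + ‖x - y‖) ^ 3) := by
    intro y
    have h1 : (0:ℝ) ≤ ‖y‖ ^ 2 := by positivity
    have h2 : (0:ℝ) ≤ (1 + t + ‖x - y‖) ^ 3 := by positivity
    positivity
  -- values of the majorant integrals
  have hval1 : (∫ y : EuclideanSpace ℝ (Fin 3), f₁ ‖y‖) = 4 * π * (3 / (2 * t ^ 2)) := by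
    rw [kernel_radial_integral_E3 f₁, kernel_integral_aux1 ht]
  have hval2 : (∫ y : EuclideanSpace ℝ (Fin 3), f₂ ‖y - x‖) = 4 * π * (1 / (12 * t ^ 2)) := by
    rw [integral_sub_right_eq_self (fun y : EuclideanSpace ℝ (Fin 3) => f₂ ‖y‖) x,
      kernel_radial_integral_E3 f₂, kernel_integral_aux2 ht]
  calc (∫ y : EuclideanSpace ℝ (Fin 3), 1 / (‖y‖ ^ 2 * (1 + t + ‖x - y‖) ^ 3))
      ≤ ∫ y : EuclideanSpace ℝ (Fin 3), (f₁ ‖y‖ + f₂ ‖y - x‖) :=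
        integral_mono_of_nonneg (Filter.Eventually.of_forall hnn) hintg
          (Filter.Eventually.of_forall hptw)
    _ = (∫ y : EuclideanSpace ℝ (Fin 3), f₁ ‖y‖) + ∫ y : EuclideanSpace ℝ (Fin 3), f₂ ‖y - x‖ := integral_add hint1 hint2'
    _ = 4 * π * (3 / (2 * t ^ 2)) + 4 * π * (1 / (12 * t ^ 2)) := by rw [hval1, hval2]
    _ ≤ 7 * π / t ^ 2 := by
        have ht2 : (0:ℝ) < t ^ 2 := by positivity
        have heq : 4 * π * (3 / (2 * t ^ 2)) + 4 * π * (1 / (12 * t ^ 2))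
            = (19 / 3 * π) / t ^ 2 := by
          field_simp
          ring
        rw [heq]
        have hle : (19:ℝ) / 3 * π ≤ 7 * π := by nlinarith [pi_pos]
        exact div_le_div_of_nonneg_right hle ht2.le |>.trans_eq rfl
end

section
/- Suppose Ψ : [2,∞) × ℝ³ × ℝ³ → ℝ is continuous and bounded, and admits two asymptotic polyhomogeneous expansions of order N₀: there are continuous bounded functions A_{q,α,p}, B_{q,α,p} : ℝ³ → ℝ (indices q ≤ N₀, |α| + p ≤ q) and S ∈ ℕ, C > 0 such that for all t ≥ 2 and all (x,v) with |x| ≤ t, both |Ψ(t,x,v) − Σ_{q ≤ N₀} Σ_{|α|+p ≤ q} (x^α log^p(t)/t^q) A_{q,α,p}(v)| and the analogous quantity with B in place of A are bounded by C ⟨x⟩^{N₀+1} log^S(t) / t^{N₀+1}. Then A_{q,α,p} = B_{q,α,p} for all q ≤ N₀ and |α| + p ≤ q. -/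
open MeasureTheory Real Filter

abbrev E3 := EuclideanSpace ℝ (Fin 3)

/-- Pairs `(α, p)` with `|α| + p ≤ q`. -/
def coefIdx (q : ℕ) : Finset ((Fin 3 → ℕ) × ℕ) :=
  ((Finset.Iic (fun _ => q : Fin 3 → ℕ)) ×ˢ Finset.range (q + 1)).filter
    fun ap => (∑ i, ap.1 i) + ap.2 ≤ q

/-- `log^p t / t^q → 0` for `q ≥ 1`. -/
lemma aux_log_pow_div_pow (p q : ℕ) (hq : 1 ≤ q) :
    Tendsto (fun t : ℝ => Real.log t ^ p / t ^ q) atTop (nhds 0) := by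
  apply squeeze_zero_norm' (a := fun t : ℝ => Real.log t ^ p / t)
  · filter_upwards [eventually_ge_atTop (1:ℝ)] with t ht
    have ht0 : (0:ℝ) < t := lt_of_lt_of_le one_pos ht
    have hlog : 0 ≤ Real.log t := Real.log_nonneg ht
    rw [Real.norm_eq_abs, abs_div, abs_pow, abs_pow, abs_of_pos ht0, abs_of_nonneg hlog]
    gcongr
    exact le_self_pow₀ ht (by omega)
  · simpa using Real.tendsto_pow_log_div_mul_add_atTop 1 0 p one_ne_zero

/-- A real polynomial whose values tend to `0` at `+∞` has zero coefficients. -/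
lemma aux_poly_coeff_zero {m : ℕ} {c : ℕ → ℝ}
    (h : Tendsto (fun u : ℝ => ∑ p ∈ Finset.range m, c p * u ^ p) atTop (nhds 0)) :
    ∀ p, p < m → c p = 0 := by
  set P : Polynomial ℝ := ∑ p ∈ Finset.range m, Polynomial.C (c p) * Polynomial.X ^ p with hP
  have hev : ∀ u : ℝ, P.eval u = ∑ p ∈ Finset.range m, c p * u ^ p := by
    intro u; simp [hP, Polynomial.eval_finset_sum]
  have hPev : Tendsto (fun u : ℝ => P.eval u) atTop (nhds 0) := by
    simpa only [hev] using h
  have hP0 : P = 0 := by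
    by_contra hne
    rcases lt_or_ge 0 P.degree with hd | hd
    · exact not_tendsto_nhds_of_tendsto_atTop (Polynomial.abs_tendsto_atTop P hd) 0
        (by simpa using hPev.abs)
    · obtain ⟨a, ha⟩ : ∃ a, P = Polynomial.C a := ⟨P.coeff 0, Polynomial.eq_C_of_degree_le_zero hd⟩
      have hca : Tendsto (fun _ : ℝ => a) atTop (nhds (0:ℝ)) := by
        simpa [ha] using hPev
      have ha0 : a = 0 := tendsto_nhds_unique tendsto_const_nhds hca
      exact hne (by rw [ha, ha0, map_zero])
  intro p hp
  have hc : P.coeff p = c p := by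
    rw [hP, Polynomial.finset_sum_coeff]
    rw [Finset.sum_congr rfl (fun i _ => by
      rw [Polynomial.coeff_C_mul, Polynomial.coeff_X_pow])]
    simp [Finset.sum_ite_eq, hp, eq_comm]
  rw [← hc, hP0, Polynomial.coeff_zero]

/-- A multivariate polynomial identity: if `∑ c α ∏ y^α = 0` for all `y`, coefficients vanish. -/
lemma aux_mv_coeff_zero {s : Finset (Fin 3 → ℕ)} {c : (Fin 3 → ℕ) → ℝ}
    (h : ∀ y : Fin 3 → ℝ, ∑ α ∈ s, c α * ∏ i, y i ^ α i = 0) :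
    ∀ α ∈ s, c α = 0 := by
  set P : MvPolynomial (Fin 3) ℝ :=
    ∑ α ∈ s, MvPolynomial.monomial (Finsupp.equivFunOnFinite.symm α) (c α) with hP
  have hev : ∀ y : Fin 3 → ℝ, MvPolynomial.eval y P = ∑ α ∈ s, c α * ∏ i, y i ^ α i := by
    intro y
    rw [hP, map_sum]
    refine Finset.sum_congr rfl fun α _ => ?_
    rw [MvPolynomial.eval_monomial]
    congr 1
    rw [Finsupp.prod_fintype _ _ (fun i => pow_zero (y i))]
    rfl
  have hP0 : P = 0 := by
    apply MvPolynomial.funext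
    intro y
    rw [hev y, h y, map_zero]
  intro α hα
  have hc : MvPolynomial.coeff (Finsupp.equivFunOnFinite.symm α) P = c α := by
    rw [hP, MvPolynomial.coeff_sum]
    rw [Finset.sum_eq_single α]
    · rw [MvPolynomial.coeff_monomial, if_pos rfl]
    · intro b _ hb
      rw [MvPolynomial.coeff_monomial, if_neg]
      intro hbe
      exact hb (Finsupp.equivFunOnFinite.symm.injective hbe)
    · intro hαs; exact absurd hα hαs
  rw [← hc, hP0, MvPolynomial.coeff_zero]

/-- Extract vanishing of the `q = 0` coefficients from the asymptotic bound. -/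
lemma aux_L2 (N M S : ℕ) (K : ℝ) (F : ℕ → ℕ → ℝ)
    (h : ∀ᶠ t : ℝ in atTop, |∑ q ∈ Finset.range (N+1), ∑ p ∈ Finset.range (M+1),
        F q p * Real.log t ^ p / t ^ q| ≤ K * Real.log t ^ S / t ^ (N+1)) :
    ∀ p, p ≤ M → F 0 p = 0 := by
  have hg : Tendsto (fun t : ℝ => ∑ q ∈ Finset.range (N+1), ∑ p ∈ Finset.range (M+1),
      F q p * Real.log t ^ p / t ^ q) atTop (nhds 0) := by
    apply squeeze_zero_norm' (a := fun t : ℝ => K * Real.log t ^ S / t ^ (N+1))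
    · filter_upwards [h] with t ht; simpa [Real.norm_eq_abs] using ht
    · have := (aux_log_pow_div_pow S (N+1) (by omega)).const_mul K
      simpa [mul_div_assoc] using this
  have hrest : Tendsto (fun t : ℝ => ∑ q ∈ Finset.range N, ∑ p ∈ Finset.range (M+1),
      F (q+1) p * Real.log t ^ p / t ^ (q+1)) atTop (nhds 0) := by
    have : (0:ℝ) = ∑ _q ∈ Finset.range N, ∑ _p ∈ Finset.range (M+1), (0:ℝ) := by simp
    rw [this]
    refine tendsto_finset_sum _ fun q _ => tendsto_finset_sum _ fun p _ => ?_
    have := (aux_log_pow_div_pow p (q+1) (by omega)).const_mul (F (q+1) p)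
    simpa [mul_div_assoc] using this
  have hpoly : Tendsto (fun t : ℝ => ∑ p ∈ Finset.range (M+1), F 0 p * Real.log t ^ p)
      atTop (nhds 0) := by
    have heq : (fun t : ℝ => ∑ p ∈ Finset.range (M+1), F 0 p * Real.log t ^ p)
        = fun t : ℝ => (∑ q ∈ Finset.range (N+1), ∑ p ∈ Finset.range (M+1),
            F q p * Real.log t ^ p / t ^ q)
          - ∑ q ∈ Finset.range N, ∑ p ∈ Finset.range (M+1),
            F (q+1) p * Real.log t ^ p / t ^ (q+1) := by
      funext t
      rw [Finset.sum_range_succ'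
        (fun q => ∑ p ∈ Finset.range (M+1), F q p * Real.log t ^ p / t ^ q) N]
      simp [pow_zero, div_one]
    rw [heq]
    simpa using hg.sub hrest
  have hu : Tendsto (fun u : ℝ => ∑ p ∈ Finset.range (M+1), F 0 p * u ^ p) atTop (nhds 0) := by
    have hcomp := hpoly.comp Real.tendsto_exp_atTop
    have heq : ((fun t : ℝ => ∑ p ∈ Finset.range (M+1), F 0 p * Real.log t ^ p) ∘ Real.exp)
        = fun u : ℝ => ∑ p ∈ Finset.range (M+1), F 0 p * u ^ p := by
      funext u; simp [Function.comp, Real.log_exp]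
    rwa [heq] at hcomp
  intro p hp
  exact aux_poly_coeff_zero hu p (by omega)

/-- Main asymptotic uniqueness lemma for two-variable expansions in `log t / t`. -/
lemma aux_L1 (N : ℕ) (M S : ℕ) (K : ℝ) : ∀ F : ℕ → ℕ → ℝ,
    (∀ᶠ t : ℝ in atTop, |∑ q ∈ Finset.range (N+1), ∑ p ∈ Finset.range (M+1),
        F q p * Real.log t ^ p / t ^ q| ≤ K * Real.log t ^ S / t ^ (N+1)) →
    ∀ q, q ≤ N → ∀ p, p ≤ M → F q p = 0 := by
  induction N with
  | zero =>
    intro F h q hq p hp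
    interval_cases q
    exact aux_L2 0 M S K F h p hp
  | succ N ih =>
    intro F h q hq p hp
    have h0 : ∀ p, p ≤ M → F 0 p = 0 := aux_L2 (N+1) M S K F h
    have h' : ∀ᶠ t : ℝ in atTop, |∑ q ∈ Finset.range (N+1), ∑ p ∈ Finset.range (M+1),
        F (q+1) p * Real.log t ^ p / t ^ q| ≤ K * Real.log t ^ S / t ^ (N+1) := by
      filter_upwards [h, eventually_ge_atTop (1:ℝ)] with t ht ht1
      have ht0 : (0:ℝ) < t := lt_of_lt_of_le one_pos ht1
      have key : ∑ q ∈ Finset.range (N+1), ∑ p ∈ Finset.range (M+1),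
            F (q+1) p * Real.log t ^ p / t ^ q
          = t * ∑ q ∈ Finset.range (N+2), ∑ p ∈ Finset.range (M+1),
            F q p * Real.log t ^ p / t ^ q := by
        rw [Finset.sum_range_succ'
          (fun q => ∑ p ∈ Finset.range (M+1), F q p * Real.log t ^ p / t ^ q) (N+1)]
        have hz : ∑ p ∈ Finset.range (M+1), F 0 p * Real.log t ^ p / t ^ 0 = 0 := by
          refine Finset.sum_eq_zero fun p hp' => ?_
          rw [h0 p (Nat.lt_succ_iff.mp (Finset.mem_range.mp hp'))]
          simp
        rw [hz, add_zero, Finset.mul_sum]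
        refine Finset.sum_congr rfl fun q _ => ?_
        rw [Finset.mul_sum]
        refine Finset.sum_congr rfl fun p _ => ?_
        rw [pow_succ]
        field_simp
      rw [key, abs_mul, abs_of_pos ht0]
      calc t * |∑ q ∈ Finset.range (N+2), ∑ p ∈ Finset.range (M+1),
            F q p * Real.log t ^ p / t ^ q|
          ≤ t * (K * Real.log t ^ S / t ^ (N+2)) := by
            exact mul_le_mul_of_nonneg_left ht ht0.le
        _ = K * Real.log t ^ S / t ^ (N+1) := by
            rw [pow_succ]
            field_simp
    match q with
    | 0 => exact h0 p hp
    | q + 1 => exact ih (fun q p => F (q+1) p) h' q (by omega) p hp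

/-- Uniqueness of the coefficients of asymptotic polyhomogeneous expansions of order `N₀`:
if a continuous bounded `Ψ` admits two such expansions with coefficient families `A` and
`B`, then `A = B` on the admissible index range. -/
theorem polyhomogeneous_expansion_unique (N₀ : ℕ) (Ψ : ℝ → E3 → E3 → ℝ)
    (hcont : Continuous fun p : ℝ × E3 × E3 => Ψ p.1 p.2.1 p.2.2)
    (hbdd : ∃ M : ℝ, ∀ t : ℝ, 2 ≤ t → ∀ x v : E3, |Ψ t x v| ≤ M)
    (A B : ℕ → (Fin 3 → ℕ) → ℕ → E3 → ℝ)
    (hA : ∀ q α p, Continuous (A q α p) ∧ ∃ M : ℝ, ∀ v, |A q α p v| ≤ M)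
    (hB : ∀ q α p, Continuous (B q α p) ∧ ∃ M : ℝ, ∀ v, |B q α p v| ≤ M)
    (hexpA : ∃ S : ℕ, ∃ C : ℝ, 0 < C ∧
      ∀ t : ℝ, 2 ≤ t → ∀ x v : E3, ‖x‖ ≤ t →
        |Ψ t x v - ∑ q ∈ Finset.range (N₀ + 1), ∑ ap ∈ coefIdx q,
            (∏ i, x i ^ ap.1 i) * Real.log t ^ ap.2 / t ^ q * A q ap.1 ap.2 v|
          ≤ C * Real.sqrt (1 + ‖x‖ ^ 2) ^ (N₀ + 1) * Real.log t ^ S / t ^ (N₀ + 1))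
    (hexpB : ∃ S : ℕ, ∃ C : ℝ, 0 < C ∧
      ∀ t : ℝ, 2 ≤ t → ∀ x v : E3, ‖x‖ ≤ t →
        |Ψ t x v - ∑ q ∈ Finset.range (N₀ + 1), ∑ ap ∈ coefIdx q,
            (∏ i, x i ^ ap.1 i) * Real.log t ^ ap.2 / t ^ q * B q ap.1 ap.2 v|
          ≤ C * Real.sqrt (1 + ‖x‖ ^ 2) ^ (N₀ + 1) * Real.log t ^ S / t ^ (N₀ + 1)) :
    ∀ q : ℕ, q ≤ N₀ → ∀ (α : Fin 3 → ℕ) (p : ℕ), (∑ i, α i) + p ≤ q →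
      A q α p = B q α p := by
  classical
  obtain ⟨SA, CA, hCA, hA'⟩ := hexpA
  obtain ⟨SB, CB, hCB, hB'⟩ := hexpB
  set S : ℕ := max SA SB with hS
  -- reorganization of the double sum
  have reorg : ∀ (t : ℝ) (v : E3) (x : E3),
      ∑ q ∈ Finset.range (N₀+1), ∑ p ∈ Finset.range (N₀+1),
        (∑ ap ∈ (coefIdx q).filter (fun ap => ap.2 = p),
          (∏ i, x i ^ ap.1 i) * (A q ap.1 ap.2 v - B q ap.1 ap.2 v))
          * Real.log t ^ p / t ^ q
      = ∑ q ∈ Finset.range (N₀+1), ∑ ap ∈ coefIdx q,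
          (∏ i, x i ^ ap.1 i) * Real.log t ^ ap.2 / t ^ q
            * (A q ap.1 ap.2 v - B q ap.1 ap.2 v) := by
    intro t v x
    refine Finset.sum_congr rfl fun q hq => ?_
    have hqN : q ≤ N₀ := Nat.lt_succ_iff.mp (Finset.mem_range.mp hq)
    have step1 : ∀ p ∈ Finset.range (N₀+1),
        (∑ ap ∈ (coefIdx q).filter (fun ap => ap.2 = p),
          (∏ i, x i ^ ap.1 i) * (A q ap.1 ap.2 v - B q ap.1 ap.2 v))
          * Real.log t ^ p / t ^ q
        = ∑ ap ∈ coefIdx q, (if ap.2 = p then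
            ((∏ i, x i ^ ap.1 i) * (A q ap.1 ap.2 v - B q ap.1 ap.2 v))
              * Real.log t ^ p / t ^ q else 0) := by
      intro p _
      rw [Finset.sum_mul, Finset.sum_div, Finset.sum_filter]
    rw [Finset.sum_congr rfl step1, Finset.sum_comm]
    refine Finset.sum_congr rfl fun ap hap => ?_
    have hmem : ap.2 ∈ Finset.range (N₀+1) := by
      have h1 := (Finset.mem_filter.mp hap).1
      have h2 := (Finset.mem_product.mp h1).2
      have := Finset.mem_range.mp h2
      exact Finset.mem_range.mpr (by omega)
    rw [Finset.sum_ite_eq (Finset.range (N₀+1)) ap.2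
      (fun p => ((∏ i, x i ^ ap.1 i) * (A q ap.1 ap.2 v - B q ap.1 ap.2 v))
        * Real.log t ^ p / t ^ q), if_pos hmem]
    ring
  -- main vanishing claim
  have main : ∀ v : E3, ∀ y : Fin 3 → ℝ, ∀ q, q ≤ N₀ → ∀ p, p ≤ N₀ →
      ∑ ap ∈ (coefIdx q).filter (fun ap => ap.2 = p),
        (∏ i, y i ^ ap.1 i) * (A q ap.1 ap.2 v - B q ap.1 ap.2 v) = 0 := by
    intro v y
    set x : E3 := (WithLp.equiv 2 (Fin 3 → ℝ)).symm y with hxdef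
    have hxy : ∀ i, x i = y i := fun i => rfl
    have hbound : ∀ᶠ t : ℝ in atTop,
        |∑ q ∈ Finset.range (N₀+1), ∑ p ∈ Finset.range (N₀+1),
          (∑ ap ∈ (coefIdx q).filter (fun ap => ap.2 = p),
            (∏ i, x i ^ ap.1 i) * (A q ap.1 ap.2 v - B q ap.1 ap.2 v))
            * Real.log t ^ p / t ^ q|
        ≤ ((CA + CB) * Real.sqrt (1 + ‖x‖ ^ 2) ^ (N₀+1))
            * Real.log t ^ S / t ^ (N₀+1) := by
      filter_upwards [eventually_ge_atTop (max 3 ‖x‖)] with t ht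
      have ht3 : (3:ℝ) ≤ t := le_trans (le_max_left _ _) ht
      have ht2 : (2:ℝ) ≤ t := by linarith
      have hxt : ‖x‖ ≤ t := le_trans (le_max_right _ _) ht
      have hlog1 : 1 ≤ Real.log t := by
        rw [Real.le_log_iff_exp_le (by linarith)]
        calc Real.exp 1 ≤ 2.7182818286 := Real.exp_one_lt_d9.le
          _ ≤ t := by linarith
      rw [reorg t v x]
      have hsplit : ∑ q ∈ Finset.range (N₀+1), ∑ ap ∈ coefIdx q,
            (∏ i, x i ^ ap.1 i) * Real.log t ^ ap.2 / t ^ q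
              * (A q ap.1 ap.2 v - B q ap.1 ap.2 v)
          = (Ψ t x v - ∑ q ∈ Finset.range (N₀ + 1), ∑ ap ∈ coefIdx q,
              (∏ i, x i ^ ap.1 i) * Real.log t ^ ap.2 / t ^ q * B q ap.1 ap.2 v)
            - (Ψ t x v - ∑ q ∈ Finset.range (N₀ + 1), ∑ ap ∈ coefIdx q,
              (∏ i, x i ^ ap.1 i) * Real.log t ^ ap.2 / t ^ q * A q ap.1 ap.2 v) := by
        simp only [mul_sub, Finset.sum_sub_distrib]
        ring
      rw [hsplit]
      have hR : (0:ℝ) ≤ Real.sqrt (1 + ‖x‖ ^ 2) ^ (N₀+1) :=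
        pow_nonneg (Real.sqrt_nonneg _) _
      have htp : (0:ℝ) < t ^ (N₀+1) := pow_pos (by linarith) _
      have eA : Real.log t ^ SA ≤ Real.log t ^ S :=
        pow_le_pow_right₀ hlog1 (le_max_left _ _)
      have eB : Real.log t ^ SB ≤ Real.log t ^ S :=
        pow_le_pow_right₀ hlog1 (le_max_right _ _)
      calc |(Ψ t x v - ∑ q ∈ Finset.range (N₀ + 1), ∑ ap ∈ coefIdx q,
              (∏ i, x i ^ ap.1 i) * Real.log t ^ ap.2 / t ^ q * B q ap.1 ap.2 v)
            - (Ψ t x v - ∑ q ∈ Finset.range (N₀ + 1), ∑ ap ∈ coefIdx q,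
              (∏ i, x i ^ ap.1 i) * Real.log t ^ ap.2 / t ^ q * A q ap.1 ap.2 v)|
          ≤ |Ψ t x v - ∑ q ∈ Finset.range (N₀ + 1), ∑ ap ∈ coefIdx q,
              (∏ i, x i ^ ap.1 i) * Real.log t ^ ap.2 / t ^ q * B q ap.1 ap.2 v|
            + |Ψ t x v - ∑ q ∈ Finset.range (N₀ + 1), ∑ ap ∈ coefIdx q,
              (∏ i, x i ^ ap.1 i) * Real.log t ^ ap.2 / t ^ q * A q ap.1 ap.2 v| :=
            abs_sub _ _
        _ ≤ CB * Real.sqrt (1 + ‖x‖ ^ 2) ^ (N₀ + 1) * Real.log t ^ SB / t ^ (N₀ + 1)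
            + CA * Real.sqrt (1 + ‖x‖ ^ 2) ^ (N₀ + 1) * Real.log t ^ SA / t ^ (N₀ + 1) :=
            add_le_add (hB' t ht2 x v hxt) (hA' t ht2 x v hxt)
        _ ≤ ((CA + CB) * Real.sqrt (1 + ‖x‖ ^ 2) ^ (N₀+1))
            * Real.log t ^ S / t ^ (N₀+1) := by
            rw [← add_div, div_le_div_iff₀ htp htp]
            have b1 : CB * Real.sqrt (1 + ‖x‖ ^ 2) ^ (N₀ + 1) * Real.log t ^ SB
                ≤ CB * Real.sqrt (1 + ‖x‖ ^ 2) ^ (N₀ + 1) * Real.log t ^ S :=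
              mul_le_mul_of_nonneg_left eB (mul_nonneg hCB.le hR)
            have b2 : CA * Real.sqrt (1 + ‖x‖ ^ 2) ^ (N₀ + 1) * Real.log t ^ SA
                ≤ CA * Real.sqrt (1 + ‖x‖ ^ 2) ^ (N₀ + 1) * Real.log t ^ S :=
              mul_le_mul_of_nonneg_left eA (mul_nonneg hCA.le hR)
            nlinarith [htp.le, mul_le_mul_of_nonneg_right b1 htp.le,
              mul_le_mul_of_nonneg_right b2 htp.le]
    have := aux_L1 N₀ N₀ S ((CA + CB) * Real.sqrt (1 + ‖x‖ ^ 2) ^ (N₀+1))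
      (fun q p => ∑ ap ∈ (coefIdx q).filter (fun ap => ap.2 = p),
        (∏ i, x i ^ ap.1 i) * (A q ap.1 ap.2 v - B q ap.1 ap.2 v)) hbound
    intro q hq p hp
    have h0 := this q hq p hp
    simpa only [hxy] using h0
  -- extract individual coefficients via multivariate polynomial identity
  intro q hq α p hap
  funext v
  have hpq : p ≤ q := by omega
  have hpN : p ≤ N₀ := le_trans hpq hq
  set s : Finset (Fin 3 → ℕ) := ((coefIdx q).filter (fun ap => ap.2 = p)).image Prod.fst
    with hsdef
  have hinj : ∀ a ∈ (coefIdx q).filter (fun ap => ap.2 = p),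
      ∀ b ∈ (coefIdx q).filter (fun ap => ap.2 = p), a.1 = b.1 → a = b := by
    intro a ha b hb hab
    have ha2 := (Finset.mem_filter.mp ha).2
    have hb2 := (Finset.mem_filter.mp hb).2
    exact Prod.ext hab (by rw [ha2, hb2])
  have h2 : ∀ y : Fin 3 → ℝ,
      ∑ β ∈ s, (A q β p v - B q β p v) * ∏ i, y i ^ β i = 0 := by
    intro y
    rw [hsdef, Finset.sum_image hinj]
    rw [← main v y q hq p hpN]
    refine Finset.sum_congr rfl fun ap hap' => ?_
    have h2' := (Finset.mem_filter.mp hap').2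
    rw [h2']
    ring
  have hmemcoef : (α, p) ∈ coefIdx q := by
    refine Finset.mem_filter.mpr ⟨Finset.mem_product.mpr ⟨?_, ?_⟩, by simpa using hap⟩
    · refine Finset.mem_Iic.mpr ?_
      intro i
      calc α i ≤ ∑ j, α j := Finset.single_le_sum (fun j _ => Nat.zero_le _) (Finset.mem_univ i)
        _ ≤ q := by omega
    · exact Finset.mem_range.mpr (by omega)
  have hmem : α ∈ s := by
    rw [hsdef]
    exact Finset.mem_image.mpr ⟨(α, p), Finset.mem_filter.mpr ⟨hmemcoef, rfl⟩, rfl⟩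
  have hz := aux_mv_coeff_zero (s := s) (c := fun β => A q β p v - B q β p v) h2 α hmem
  exact sub_eq_zero.mp hz
end

section
/- Let h : ℝ³ × ℝ³ → ℝ be measurable with M := sup_{y,v} ⟨y − t v⟩⁷ ⟨v⟩⁷ |h(y,v)| < ∞ for a fixed t ≥ 0. Then there is a universal constant C such that for all x ∈ ℝ³, ∫_{ℝ³} |h(x,v)| dv ≤ C M / ⟨t + |x|⟩³. -/
open MeasureTheory Real

noncomputable def qq (w : E3) : ℝ := ((1 + ‖w‖ ^ 2) ^ 2)⁻¹

lemma qq_nonneg (w : E3) : 0 ≤ qq w := by unfold qq; positivity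

lemma qq_le_one (w : E3) : qq w ≤ 1 := by
  unfold qq
  rw [inv_le_one_iff₀]
  right; nlinarith [sq_nonneg ‖w‖, sq_nonneg (‖w‖^2)]

lemma qq_cont : Continuous qq := by
  unfold qq
  fun_prop (disch := intros; positivity)

lemma qq_integrable : Integrable qq (volume : Measure E3) := by
  have h := integrable_rpow_neg_one_add_norm_sq (E := E3) (μ := volume) (r := 4) (by norm_num)
  convert h using 2 with x
  rw [qq, ← Real.rpow_natCast (1 + ‖x‖^2) 2, ← Real.rpow_neg (by positivity)]
  norm_num

lemma qq_scaling (x : E3) {t : ℝ} (ht : 0 < t) :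
    ∫ v : E3, qq (x - t • v) = (t ^ 3)⁻¹ * ∫ w : E3, qq w := by
  have : ∀ v : E3, qq (x - t • v) = (fun w => qq (x + -w)) (t • v) := by
    intro v; simp [sub_eq_add_neg]
  simp_rw [this]
  rw [Measure.integral_comp_smul_of_nonneg (volume : Measure E3) (fun w => qq (x + -w)) t
    (hR := ht.le)]
  have h2 : ∫ w : E3, qq (x + -w) = ∫ w : E3, qq w := by
    have h3 : (∫ w : E3, qq (x + -w)) = ∫ w : E3, qq (x + w) :=
      integral_neg_eq_self (fun w => qq (x + w)) volume
    rw [h3, integral_add_left_eq_self]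
  rw [h2]
  simp [smul_eq_mul, finrank_euclideanSpace_fin]

lemma qq_comp_integrable (x : E3) {t : ℝ} (ht : 0 < t) :
    Integrable (fun v : E3 => qq (x - t • v)) volume := by
  have h1 : Integrable (fun w : E3 => qq (x + -w)) volume :=
    (qq_integrable.comp_add_left x).comp_neg
  have h2 := h1.comp_smul (μ := (volume : Measure E3)) (ne_of_gt ht)
  simpa [sub_eq_add_neg] using h2

lemma one_le_sqrt_one_add_sq (s : ℝ) : 1 ≤ Real.sqrt (1 + s ^ 2) := by
  simpa using Real.sqrt_le_sqrt (show (1:ℝ) ≤ 1 + s ^ 2 by nlinarith [sq_nonneg s])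

lemma sqrt_one_add_sq_le {s : ℝ} (hs : 0 ≤ s) : Real.sqrt (1 + s ^ 2) ≤ 1 + s := by
  rw [show 1 + s = Real.sqrt ((1 + s) ^ 2) from (Real.sqrt_sq (by positivity)).symm]
  exact Real.sqrt_le_sqrt (by nlinarith)

lemma one_add_le_sqrt2 {s : ℝ} (hs : 0 ≤ s) :
    1 + s ≤ Real.sqrt 2 * Real.sqrt (1 + s ^ 2) := by
  rw [show 1 + s = Real.sqrt ((1 + s) ^ 2) from (Real.sqrt_sq (by positivity)).symm,
    ← Real.sqrt_mul (by norm_num)]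
  exact Real.sqrt_le_sqrt (by nlinarith [sq_nonneg (1 - s)])

lemma sqrt2_cube_le : (Real.sqrt 2) ^ 3 ≤ 3 := by
  nlinarith [Real.sq_sqrt (show (0:ℝ) ≤ 2 by norm_num), Real.sqrt_nonneg 2,
    sq_nonneg (Real.sqrt 2 - 3/2)]

lemma bracket_ineq {t : ℝ} (ht : 0 ≤ t) (x v : E3) :
    Real.sqrt (1 + (t + ‖x‖) ^ 2) ≤
      3 * Real.sqrt (1 + t ^ 2) *
        (Real.sqrt (1 + ‖v‖ ^ 2) * Real.sqrt (1 + ‖x - t • v‖ ^ 2)) := by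
  set a := ‖x - t • v‖ with ha
  set b := ‖v‖ with hb
  have ha0 : 0 ≤ a := norm_nonneg _
  have hb0 : 0 ≤ b := norm_nonneg _
  have hx : ‖x‖ ≤ a + t * b := by
    calc ‖x‖ = ‖(x - t • v) + t • v‖ := by rw [sub_add_cancel]
    _ ≤ ‖x - t • v‖ + ‖t • v‖ := norm_add_le _ _
    _ = a + t * b := by rw [norm_smul]; simp [abs_of_nonneg ht, ha, hb]
  have hx0 : (0:ℝ) ≤ ‖x‖ := norm_nonneg _
  have s1 : Real.sqrt (1 + (t + ‖x‖) ^ 2) ≤ 1 + (t + ‖x‖) :=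
    sqrt_one_add_sq_le (by positivity)
  have s2 : 1 + (t + ‖x‖) ≤ (1 + t) * ((1 + b) * (1 + a)) := by
    nlinarith [hx, mul_nonneg ht ha0, mul_nonneg ha0 hb0, mul_nonneg ht hb0,
      mul_nonneg (mul_nonneg ht hb0) ha0]
  have s3 := one_add_le_sqrt2 ht
  have s4 := one_add_le_sqrt2 hb0
  have s5 := one_add_le_sqrt2 ha0
  have m1 : (1 + t) * ((1 + b) * (1 + a)) ≤
      (Real.sqrt 2 * Real.sqrt (1 + t ^ 2)) *
        ((Real.sqrt 2 * Real.sqrt (1 + b ^ 2)) * (Real.sqrt 2 * Real.sqrt (1 + a ^ 2))) := by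
    gcongr <;> positivity
  have m2 : (Real.sqrt 2 * Real.sqrt (1 + t ^ 2)) *
        ((Real.sqrt 2 * Real.sqrt (1 + b ^ 2)) * (Real.sqrt 2 * Real.sqrt (1 + a ^ 2))) =
      (Real.sqrt 2) ^ 3 * (Real.sqrt (1 + t ^ 2) *
        (Real.sqrt (1 + b ^ 2) * Real.sqrt (1 + a ^ 2))) := by ring
  have m3 : (Real.sqrt 2) ^ 3 * (Real.sqrt (1 + t ^ 2) *
        (Real.sqrt (1 + b ^ 2) * Real.sqrt (1 + a ^ 2))) ≤
      3 * (Real.sqrt (1 + t ^ 2) * (Real.sqrt (1 + b ^ 2) * Real.sqrt (1 + a ^ 2))) := by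
    apply mul_le_mul_of_nonneg_right sqrt2_cube_le (by positivity)
  calc Real.sqrt (1 + (t + ‖x‖) ^ 2) ≤ 1 + (t + ‖x‖) := s1
    _ ≤ (1 + t) * ((1 + b) * (1 + a)) := s2
    _ ≤ _ := m1
    _ = _ := m2
    _ ≤ 3 * (Real.sqrt (1 + t ^ 2) * (Real.sqrt (1 + b ^ 2) * Real.sqrt (1 + a ^ 2))) := m3
    _ = _ := by ring

lemma key_aux {A u av aw H M : ℝ} (hu : 1 ≤ u) (hav : 1 ≤ av) (haw : 1 ≤ aw)
    (hA : 0 < A) (hA3 : A ≤ 3 * u * (av * aw)) (hH : 0 ≤ H)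
    (hM : aw ^ 7 * av ^ 7 * H ≤ M) :
    H ≤ 27 * M * u ^ 3 / A ^ 3 * ((aw ^ 4)⁻¹ * (av ^ 4)⁻¹) := by
  have hu0 : (0:ℝ) < u := lt_of_lt_of_le one_pos hu
  have hav0 : (0:ℝ) < av := lt_of_lt_of_le one_pos hav
  have haw0 : (0:ℝ) < aw := lt_of_lt_of_le one_pos haw
  rw [div_mul_eq_mul_div, le_div_iff₀ (by positivity)]
  have h1 : H * A ^ 3 ≤ H * (27 * u ^ 3 * (av ^ 3 * aw ^ 3)) := by
    apply mul_le_mul_of_nonneg_left _ hH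
    calc A ^ 3 ≤ (3 * u * (av * aw)) ^ 3 := pow_le_pow_left₀ hA.le hA3 3
      _ = 27 * u ^ 3 * (av ^ 3 * aw ^ 3) := by ring
  calc H * A ^ 3 ≤ H * (27 * u ^ 3 * (av ^ 3 * aw ^ 3)) := h1
    _ = (aw ^ 7 * av ^ 7 * H) * (27 * u ^ 3) * ((aw ^ 4)⁻¹ * (av ^ 4)⁻¹) := by
        field_simp
    _ ≤ M * (27 * u ^ 3) * ((aw ^ 4)⁻¹ * (av ^ 4)⁻¹) := by
        apply mul_le_mul_of_nonneg_right (mul_le_mul_of_nonneg_right hM (by positivity))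
          (by positivity)
    _ = 27 * M * u ^ 3 * ((aw ^ 4)⁻¹ * (av ^ 4)⁻¹) := by ring

lemma qq_eq_inv_sqrt_pow (w : E3) : qq w = ((Real.sqrt (1 + ‖w‖ ^ 2)) ^ 4)⁻¹ := by
  rw [qq, show (4:ℕ) = 2 * 2 from rfl, pow_mul, Real.sq_sqrt (by positivity)]

/-- Linear decay of velocity averages: there is a universal constant `C` such that whenever
`⟨y − tv⟩⁷ ⟨v⟩⁷ |h(y,v)| ≤ M` for all `y, v` (for a fixed `t ≥ 0`), then for all `x`,
`∫ |h(x,v)| dv ≤ C M / ⟨t + |x|⟩³`. -/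
theorem velocity_average_decay :
    ∃ C : ℝ, 0 < C ∧
      ∀ t : ℝ, 0 ≤ t →
        ∀ h : E3 × E3 → ℝ, Measurable h →
          ∀ M : ℝ,
            (∀ y v : E3,
              Real.sqrt (1 + ‖y - t • v‖ ^ 2) ^ 7 * Real.sqrt (1 + ‖v‖ ^ 2) ^ 7 *
                |h (y, v)| ≤ M) →
            ∀ x : E3,
              (∫ v : E3, |h (x, v)|) ≤ C * M / Real.sqrt (1 + (t + ‖x‖) ^ 2) ^ 3 := by
  set I0 := ∫ w : E3, qq w with hI0
  have I0_nonneg : 0 ≤ I0 := integral_nonneg qq_nonneg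
  refine ⟨81 * (I0 + 1), by positivity, ?_⟩
  intro t ht h hmeas M hM x
  have hM0 : 0 ≤ M := le_trans (by positivity) (hM 0 0)
  set A := Real.sqrt (1 + (t + ‖x‖) ^ 2) with hA
  have hA1 : 1 ≤ A := one_le_sqrt_one_add_sq _
  have hA0 : 0 < A := lt_of_lt_of_le one_pos hA1
  set u := Real.sqrt (1 + t ^ 2) with hu
  have hu1 : 1 ≤ u := one_le_sqrt_one_add_sq _
  -- pointwise bound
  have key : ∀ v : E3, |h (x, v)| ≤
      27 * M * u ^ 3 / A ^ 3 * (qq (x - t • v) * qq v) := by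
    intro v
    have hk := key_aux (A := A) (u := u) (av := Real.sqrt (1 + ‖v‖ ^ 2))
      (aw := Real.sqrt (1 + ‖x - t • v‖ ^ 2)) (H := |h (x, v)|) (M := M)
      hu1 (one_le_sqrt_one_add_sq _) (one_le_sqrt_one_add_sq _) hA0
      (bracket_ineq ht x v) (abs_nonneg _) (hM x v)
    rw [qq_eq_inv_sqrt_pow, qq_eq_inv_sqrt_pow]
    exact hk
  -- integrability of the majorant
  have hGcont : Continuous (fun v : E3 => qq (x - t • v) * qq v) := by
    apply Continuous.mul (qq_cont.comp (continuous_const.sub (continuous_id.const_smul t))) qq_cont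
  have intG : Integrable (fun v : E3 => qq (x - t • v) * qq v) volume := by
    refine qq_integrable.mono' hGcont.aestronglyMeasurable (ae_of_all _ fun v => ?_)
    rw [Real.norm_eq_abs, abs_of_nonneg (mul_nonneg (qq_nonneg _) (qq_nonneg _))]
    calc qq (x - t • v) * qq v ≤ 1 * qq v :=
      mul_le_mul_of_nonneg_right (qq_le_one _) (qq_nonneg _)
      _ = qq v := one_mul _
  have intG_nonneg : 0 ≤ ∫ v : E3, qq (x - t • v) * qq v :=
    integral_nonneg fun v => mul_nonneg (qq_nonneg _) (qq_nonneg _)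
  -- step 1
  have step1 : (∫ v : E3, |h (x, v)|) ≤
      27 * M * u ^ 3 / A ^ 3 * ∫ v : E3, qq (x - t • v) * qq v := by
    rw [← integral_const_mul]
    exact integral_mono_of_nonneg (ae_of_all _ fun v => abs_nonneg _)
      (intG.const_mul _) (ae_of_all _ key)
  -- step 2
  have step2 : u ^ 3 * ∫ v : E3, qq (x - t • v) * qq v ≤ 3 * I0 := by
    rcases le_or_gt t 1 with h1 | h1
    · have hu3 : u ^ 3 ≤ 3 := by
        have : u ≤ Real.sqrt 2 := Real.sqrt_le_sqrt (by nlinarith)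
        calc u ^ 3 ≤ (Real.sqrt 2) ^ 3 := pow_le_pow_left₀ (by positivity) this 3
          _ ≤ 3 := sqrt2_cube_le
      have hint : (∫ v : E3, qq (x - t • v) * qq v) ≤ I0 := by
        refine integral_mono intG qq_integrable fun v => ?_
        calc qq (x - t • v) * qq v ≤ 1 * qq v :=
          mul_le_mul_of_nonneg_right (qq_le_one _) (qq_nonneg _)
          _ = qq v := one_mul _
      exact mul_le_mul hu3 hint intG_nonneg (by norm_num)
    · have ht0 : 0 < t := lt_trans one_pos h1
      have hint : (∫ v : E3, qq (x - t • v) * qq v) ≤ (t ^ 3)⁻¹ * I0 := by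
        rw [← qq_scaling x ht0]
        refine integral_mono intG (qq_comp_integrable x ht0) fun v => ?_
        calc qq (x - t • v) * qq v ≤ qq (x - t • v) * 1 :=
          mul_le_mul_of_nonneg_left (qq_le_one _) (qq_nonneg _)
          _ = qq (x - t • v) := mul_one _
      have hu3 : u ^ 3 ≤ 3 * t ^ 3 := by
        have h2 : u ≤ Real.sqrt 2 * t := by
          rw [show Real.sqrt 2 * t = Real.sqrt (2 * t ^ 2) by
            rw [Real.sqrt_mul (by norm_num), Real.sqrt_sq ht0.le]]
          exact Real.sqrt_le_sqrt (by nlinarith)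
        calc u ^ 3 ≤ (Real.sqrt 2 * t) ^ 3 := pow_le_pow_left₀ (by positivity) h2 3
          _ = (Real.sqrt 2) ^ 3 * t ^ 3 := by ring
          _ ≤ 3 * t ^ 3 := mul_le_mul_of_nonneg_right sqrt2_cube_le (by positivity)
      calc u ^ 3 * ∫ v : E3, qq (x - t • v) * qq v
          ≤ (3 * t ^ 3) * ((t ^ 3)⁻¹ * I0) :=
            mul_le_mul hu3 hint intG_nonneg (by positivity)
        _ = 3 * I0 := by field_simp
  -- finish
  calc (∫ v : E3, |h (x, v)|)
      ≤ 27 * M * u ^ 3 / A ^ 3 * ∫ v : E3, qq (x - t • v) * qq v := step1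
    _ = (27 * M / A ^ 3) * (u ^ 3 * ∫ v : E3, qq (x - t • v) * qq v) := by ring
    _ ≤ (27 * M / A ^ 3) * (3 * I0) :=
        mul_le_mul_of_nonneg_left step2 (by positivity)
    _ = 81 * I0 * M / A ^ 3 := by ring
    _ ≤ 81 * (I0 + 1) * M / A ^ 3 := by
        apply div_le_div_of_nonneg_right ?_ (by positivity)
        nlinarith
end
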